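/- Let E be a finite-dimensional real vector space, π₀ : E* → E a skew-symmetric linear map, and Q : E → E a linear automorphism with Q ∘ π₀ ∘ Qᵀ = π₀, where Qᵀ : E* → E* is the transpose of Q. Let W_per = { (λ,φ) ∈ W(E) : λ(1) = Q(λ(0)) and φ(0) = Qᵀ(φ(1)) } and V_per = { (λ,φ) ∈ W_per : λ(u) = λ(0) − π₀(∫₀ᵘ φ(s) ds) for all u ∈ [0,1] }. Then the Ω-orthogonal of V_per within W_per equals the set of (λ̃, φ̃) ∈ W_per for which there exists a continuously differentiable b : [0,1] → E* with b(0) = Qᵀ(b(1)), λ̃(u) = π₀(b(u)) for all u, and φ̃(u) = −b'(u) for all u. -/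

import Mathlib

open MeasureTheory Set

section AuxHelpers

open intervalIntegral

lemma myIntegrable {F : Type*} [NormedAddCommGroup F] {f : ℝ → F} (hf : ContinuousOn f (Icc 0 1)) :
    IntervalIntegrable f MeasureTheory.volume 0 1 :=
  ContinuousOn.intervalIntegrable (by rwa [uIcc_of_le zero_le_one])

lemma ftc1 {F : Type*} [NormedAddCommGroup F] [NormedSpace ℝ F] [CompleteSpace F]
    {f : ℝ → F} (hf : ContinuousOn f (Icc 0 1)) :
    ∀ u ∈ Icc (0:ℝ) 1,
      HasDerivWithinAt (fun t => ∫ s in (0:ℝ)..t, f s) (f u) (Icc 0 1) u := by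
  intro u hu
  set g : ℝ → F := ((Icc (0:ℝ) 1).restrict f) ∘ (projIcc (0:ℝ) 1 zero_le_one) with hgdef
  have hg : Continuous g := hf.restrict.comp continuous_projIcc
  have hgf : ∀ x ∈ Icc (0:ℝ) 1, g x = f x := by
    intro x hx
    simp [hgdef, projIcc_of_mem zero_le_one hx]
    rfl
  have hd : HasDerivAt (fun t => ∫ s in (0:ℝ)..t, g s) (g u) u :=
    integral_hasDerivAt_right (hg.intervalIntegrable 0 u)
      (hg.stronglyMeasurable.stronglyMeasurableAtFilter) hg.continuousAt
  have heq : ∀ x ∈ Icc (0:ℝ) 1, (∫ s in (0:ℝ)..x, f s) = ∫ s in (0:ℝ)..x, g s := by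
    intro x hx
    refine integral_congr fun s hs => ?_
    rw [uIcc_of_le hx.1] at hs
    exact (hgf s ⟨hs.1, hs.2.trans hx.2⟩).symm
  have := hd.hasDerivWithinAt (s := Icc (0:ℝ) 1)
  rw [hgf u hu] at this
  exact this.congr heq (heq u hu)

lemma ftc2 {F : Type*} [NormedAddCommGroup F] [NormedSpace ℝ F] [CompleteSpace F]
    {g g' : ℝ → F} (hcont : ContinuousOn g (Icc 0 1))
    (hderiv : ∀ u ∈ Icc (0:ℝ) 1, HasDerivWithinAt g (g' u) (Icc 0 1) u)
    (hg' : ContinuousOn g' (Icc 0 1)) :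
    (∫ u in (0:ℝ)..1, g' u) = g 1 - g 0 :=
  integral_eq_sub_of_hasDeriv_right_of_le zero_le_one hcont (fun x hx =>
    (((hderiv x (Ioo_subset_Icc_self hx)).hasDerivAt
      (Icc_mem_nhds hx.1 hx.2))).hasDerivWithinAt) (myIntegrable hg')

lemma mem_of_forall_clm {F : Type*} [NormedAddCommGroup F] [NormedSpace ℝ F]
    [FiniteDimensional ℝ F] (U : Submodule ℝ F) (v : F)
    (h : ∀ α : F →L[ℝ] ℝ, (∀ x ∈ U, α x = 0) → α v = 0) : v ∈ U := by
  by_contra hv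
  have hq : U.mkQ v ≠ 0 := by
    simpa [Submodule.Quotient.mk_eq_zero] using hv
  obtain ⟨f, hf⟩ : ∃ f : Module.Dual ℝ (F ⧸ U), f (U.mkQ v) ≠ 0 := by
    by_contra hc
    push_neg at hc
    exact hq ((Module.forall_dual_apply_eq_zero_iff ℝ _).mp hc)
  have := h (LinearMap.toContinuousLinearMap (f.comp U.mkQ)) ?_
  · exact hf (by simpa using this)
  · intro x hx
    simp [Submodule.Quotient.mk_eq_zero, hx, (Submodule.Quotient.mk_eq_zero U).mpr hx]

lemma eq_on_Icc_of_eq_on_Ioo {F : Type*} [NormedAddCommGroup F] {f : ℝ → F} {c : F}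
    (hf : ContinuousOn f (Icc 0 1)) (h : ∀ u ∈ Ioo (0:ℝ) 1, f u = c) :
    ∀ u ∈ Icc (0:ℝ) 1, f u = c := by
  have hcl : closure (Ioo (0:ℝ) 1) = Icc 0 1 := closure_Ioo one_ne_zero.symm
  have key : ∀ u ∈ Icc (0:ℝ) 1, Filter.Tendsto f (nhdsWithin u (Ioo 0 1)) (nhds (f u)) := by
    intro u hu
    exact ((hf u hu).mono Ioo_subset_Icc_self).tendsto
  intro u hu
  have hne : (nhdsWithin u (Ioo (0:ℝ) 1)).NeBot := by
    rw [← mem_closure_iff_nhdsWithin_neBot, hcl]; exact hu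
  have h2 : Filter.Tendsto f (nhdsWithin u (Ioo 0 1)) (nhds c) := by
    refine Filter.Tendsto.congr' ?_ tendsto_const_nhds
    exact Filter.eventually_iff_exists_mem.mpr
      ⟨Ioo 0 1, self_mem_nhdsWithin, fun x hx => (h x hx).symm⟩
  exact tendsto_nhds_unique (key u hu) h2

lemma variational {f : ℝ → ℝ} (hf : ContinuousOn f (Icc 0 1))
    (h : ∀ ρ : ℝ → ℝ, ContinuousOn ρ (Icc 0 1) → ρ 0 = 0 → ρ 1 = 0 →
      (∫ u in (0:ℝ)..1, ρ u) = 0 → (∫ u in (0:ℝ)..1, ρ u * f u) = 0) :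
    ∀ u ∈ Icc (0:ℝ) 1, f u = f 0 := by
  set c : ℝ := 6 * ∫ u in (0:ℝ)..1, (u * (1 - u)) * f u with hc
  set ρ : ℝ → ℝ := fun u => u * (1 - u) * (f u - c) with hρdef
  have hρcont : ContinuousOn ρ (Icc 0 1) := by
    apply ContinuousOn.mul
    · exact (continuous_id.mul (continuous_const.sub continuous_id)).continuousOn
    · exact hf.sub continuousOn_const
  have hw : (∫ u in (0:ℝ)..1, u * (1 - u)) = 6⁻¹ := by
    have : ∀ u : ℝ, u * (1 - u) = u - u^2 := by intro u; ring
    simp_rw [this]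
    rw [intervalIntegral.integral_sub (Continuous.intervalIntegrable (by continuity) 0 1)
      (Continuous.intervalIntegrable (by continuity) 0 1)]
    simp [integral_id, integral_pow]
    norm_num
  have hρ0 : (∫ u in (0:ℝ)..1, ρ u) = 0 := by
    have : ∀ u : ℝ, ρ u = u * (1 - u) * f u - c * (u * (1-u)) := by intro u; simp [hρdef]; ring
    simp_rw [this]
    rw [intervalIntegral.integral_sub, intervalIntegral.integral_const_mul, hw]
    · rw [hc]; ring
    · exact myIntegrable (((continuous_id.mul (continuous_const.sub continuous_id)).continuousOn).mul hf)
    · exact Continuous.intervalIntegrable (by continuity) 0 1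
  have hmain := h ρ hρcont (by simp [hρdef]) (by simp [hρdef]) hρ0
  -- ∫ ρ (f - c) = ∫ ρ f - c ∫ ρ = 0
  have hsq : (∫ u in (0:ℝ)..1, u * (1 - u) * (f u - c)^2) = 0 := by
    have : ∀ u ∈ Icc (0:ℝ) 1, u * (1 - u) * (f u - c)^2 = ρ u * f u - c * ρ u := by
      intro u _; simp [hρdef]; ring
    rw [intervalIntegral.integral_congr (g := fun u => ρ u * f u - c * ρ u) ?_]
    · rw [intervalIntegral.integral_sub (myIntegrable (f := fun u => ρ u * f u) (hρcont.mul hf))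
        (IntervalIntegrable.const_mul (myIntegrable hρcont) c),
        hmain, intervalIntegral.integral_const_mul, hρ0]
      ring
    · intro u hu
      rw [uIcc_of_le zero_le_one] at hu
      exact this u hu
  -- now F t := ∫₀ᵗ integrand is identically 0
  set g : ℝ → ℝ := fun u => u * (1 - u) * (f u - c)^2 with hgdef
  have hgcont : ContinuousOn g (Icc 0 1) :=
    ((continuous_id.mul (continuous_const.sub continuous_id)).continuousOn).mul
      ((hf.sub continuousOn_const).pow 2)
  have hgnn : ∀ u ∈ Icc (0:ℝ) 1, 0 ≤ g u := by
    intro u hu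
    apply mul_nonneg (mul_nonneg hu.1 (by linarith [hu.2])) (sq_nonneg _)
  have hF0 : ∀ t ∈ Icc (0:ℝ) 1, (∫ u in (0:ℝ)..t, g u) = 0 := by
    intro t ht
    have h1 : 0 ≤ ∫ u in (0:ℝ)..t, g u :=
      intervalIntegral.integral_nonneg ht.1 (fun u hu => hgnn u ⟨hu.1, hu.2.trans ht.2⟩)
    have hsplit : (∫ u in (0:ℝ)..t, g u) + (∫ u in t..1, g u) = ∫ u in (0:ℝ)..1, g u := by
      apply intervalIntegral.integral_add_adjacent_intervals
      · exact (myIntegrable hgcont).mono_set (by rw [uIcc_of_le ht.1, uIcc_of_le zero_le_one]; exact Icc_subset_Icc le_rfl ht.2)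
      · exact (myIntegrable hgcont).mono_set (by rw [uIcc_of_le ht.2, uIcc_of_le zero_le_one]; exact Icc_subset_Icc ht.1 le_rfl)
    have h2 : 0 ≤ ∫ u in t..1, g u :=
      intervalIntegral.integral_nonneg ht.2 (fun u hu => hgnn u ⟨ht.1.trans hu.1, hu.2⟩)
    rw [hsq] at hsplit
    linarith
  -- derivative argument on Ioo
  have hIoo : ∀ u ∈ Ioo (0:ℝ) 1, f u = c := by
    intro u hu
    have hu' : u ∈ Icc (0:ℝ) 1 := Ioo_subset_Icc_self hu
    have hd1 : HasDerivAt (fun t => ∫ s in (0:ℝ)..t, g s) (g u) u :=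
      (ftc1 hgcont u hu').hasDerivAt (Icc_mem_nhds hu.1 hu.2)
    have hd2 : HasDerivAt (fun t => ∫ s in (0:ℝ)..t, g s) 0 u := by
      have : HasDerivWithinAt (fun t => ∫ s in (0:ℝ)..t, g s) 0 (Icc 0 1) u :=
        (hasDerivWithinAt_const u (Icc (0:ℝ) 1) (0:ℝ)).congr
          (fun y hy => hF0 y hy) (hF0 u hu')
      exact this.hasDerivAt (Icc_mem_nhds hu.1 hu.2)
    have hgu : g u = 0 := hd1.unique hd2
    have hpos : 0 < u * (1 - u) := mul_pos hu.1 (by linarith [hu.2])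
    have : (f u - c)^2 = 0 := by
      by_contra hne
      exact hne (by
        have := mul_eq_zero.mp hgu
        rcases this with h | h
        · exact absurd h (ne_of_gt hpos)
        · exact h)
    have := pow_eq_zero_iff (n := 2) (by norm_num) |>.mp this
    linarith [sub_eq_zero.mp this]
  intro u hu
  have hall := eq_on_Icc_of_eq_on_Ioo hf hIoo
  rw [hall u hu, hall 0 ⟨le_rfl, zero_le_one⟩]

end AuxHelpers

/-- An element of `W(E)`: a pair `(λ, φ)` of continuous maps on `[0,1]` with values in `E`
and in the dual `E* = E →L[ℝ] ℝ` respectively. -/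
structure WPair (E : Type*) [NormedAddCommGroup E] [NormedSpace ℝ E] where
  lam : ℝ → E
  phi : ℝ → E →L[ℝ] ℝ
  lam_cont : ContinuousOn lam (Icc 0 1)
  phi_cont : ContinuousOn phi (Icc 0 1)

/-- The alternating bilinear form `Ω((λ,φ),(λ',φ')) = ∫₀¹ (φ(u)(λ'(u)) − φ'(u)(λ(u))) du`. -/
noncomputable def Omega {E : Type*} [NormedAddCommGroup E] [NormedSpace ℝ E]
    (w w' : WPair E) : ℝ :=
  ∫ u in (0:ℝ)..(1:ℝ), (w.phi u (w'.lam u) - w'.phi u (w.lam u))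

/-- The `Ω`-orthogonal of a subset `A` taken within a subset `W'` of `W(E)`. -/
def orthWithin {E : Type*} [NormedAddCommGroup E] [NormedSpace ℝ E]
    (W' A : Set (WPair E)) : Set (WPair E) :=
  {w ∈ W' | ∀ a ∈ A, Omega a w = 0}

/-- The "periodic" (twisted by the monodromy `Q`) subspace `W_per` of `W(E)`. -/
def WPer {E : Type*} [NormedAddCommGroup E] [NormedSpace ℝ E]
    (Q : E ≃L[ℝ] E) : Set (WPair E) :=
  {w | w.lam 1 = Q (w.lam 0) ∧ w.phi 0 = (w.phi 1).comp (Q : E →L[ℝ] E)}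

/-- The subspace `V_per ⊆ W_per` of solutions of `λ(u) = λ(0) − π₀ ∫₀ᵘ φ`. -/
noncomputable def VPer {E : Type*} [NormedAddCommGroup E] [NormedSpace ℝ E]
    (π₀ : (E →L[ℝ] ℝ) →ₗ[ℝ] E) (Q : E ≃L[ℝ] E) : Set (WPair E) :=
  {w ∈ WPer Q | ∀ u ∈ Icc (0:ℝ) 1, w.lam u = w.lam 0 - π₀ (∫ s in (0:ℝ)..u, w.phi s)}

section Master
open intervalIntegral
variable {E : Type*} [NormedAddCommGroup E] [NormedSpace ℝ E] [FiniteDimensional ℝ E]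
    (π₀ : (E →L[ℝ] ℝ) →ₗ[ℝ] E)
    (Q : E ≃L[ℝ] E)

lemma master (hskew : ∀ α β : E →L[ℝ] ℝ, α (π₀ β) = - β (π₀ α)) (w : WPair E)
    (horth : ∀ a ∈ VPer π₀ Q, Omega a w = 0)
    (ρ : ℝ → ℝ) (hρc : ContinuousOn ρ (Icc 0 1)) (hρ0 : ρ 0 = 0) (hρ1 : ρ 1 = 0)
    (α : E →L[ℝ] ℝ) (x : E)
    (hx : x - Q x = (∫ u in (0:ℝ)..1, ρ u) • π₀ α) :
    (∫ u in (0:ℝ)..1, ρ u * α (w.lam u + π₀ (∫ s in (0:ℝ)..u, w.phi s)))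
      + (∫ u in (0:ℝ)..1, ρ u) * ((∫ s in (0:ℝ)..1, w.phi s) (π₀ α))
      - (∫ s in (0:ℝ)..1, w.phi s) x = 0 := by
  set R : ℝ → ℝ := fun u => ∫ s in (0:ℝ)..u, ρ s with hRdef
  have hRd : ∀ u ∈ Icc (0:ℝ) 1, HasDerivWithinAt R (ρ u) (Icc 0 1) u := ftc1 hρc
  have hRcont : ContinuousOn R (Icc 0 1) := fun u hu => (hRd u hu).continuousWithinAt
  have hR0 : R 0 = 0 := integral_same
  -- the test pair
  set v : WPair E := ⟨fun u => x - R u • π₀ α, fun u => ρ u • α,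
    continuousOn_const.sub (hRcont.smul continuousOn_const),
    hρc.smul continuousOn_const⟩ with hvdef
  have hvV : v ∈ VPer π₀ Q := by
    refine ⟨⟨?_, ?_⟩, ?_⟩
    · show x - R 1 • π₀ α = Q (x - R 0 • π₀ α)
      rw [hR0, zero_smul, sub_zero]
      have : R 1 = ∫ u in (0:ℝ)..1, ρ u := rfl
      rw [this, ← hx]; abel
    · show ρ 0 • α = ((ρ 1 • α).comp (Q : E →L[ℝ] E))
      simp [hρ0, hρ1]
    · intro u hu
      show x - R u • π₀ α = (x - R 0 • π₀ α) - π₀ (∫ s in (0:ℝ)..u, ρ s • α)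
      rw [hR0, zero_smul, sub_zero, intervalIntegral.integral_smul_const, _root_.map_smul]
  have h0 := horth v hvV
  -- unfold Omega
  have hBapp : ∀ u ∈ Icc (0:ℝ) 1, ∀ z : E,
      (∫ s in (0:ℝ)..u, w.phi s) z = ∫ s in (0:ℝ)..u, w.phi s z := by
    intro u hu z
    refine ContinuousLinearMap.intervalIntegral_apply ?_ z
    exact (myIntegrable w.phi_cont).mono_set
      (by rw [uIcc_of_le hu.1, uIcc_of_le zero_le_one]; exact Icc_subset_Icc le_rfl hu.2)
  set Bα : ℝ → ℝ := fun u => ∫ s in (0:ℝ)..u, w.phi s (π₀ α) with hBαdef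
  have hφα : ContinuousOn (fun s => w.phi s (π₀ α)) (Icc 0 1) :=
    w.phi_cont.clm_apply continuousOn_const
  have hBαd : ∀ u ∈ Icc (0:ℝ) 1, HasDerivWithinAt Bα (w.phi u (π₀ α)) (Icc 0 1) u := ftc1 hφα
  have hBαcont : ContinuousOn Bα (Icc 0 1) := fun u hu => (hBαd u hu).continuousWithinAt
  -- integrability of pieces
  have hint1 : IntervalIntegrable (fun u => ρ u * α (w.lam u)) volume 0 1 :=
    myIntegrable (hρc.mul (α.continuous.comp_continuousOn w.lam_cont))
  have hint2 : IntervalIntegrable (fun u => w.phi u x) volume 0 1 :=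
    myIntegrable (w.phi_cont.clm_apply continuousOn_const)
  have hint3 : IntervalIntegrable (fun u => R u * w.phi u (π₀ α)) volume 0 1 :=
    myIntegrable (hRcont.mul hφα)
  have hintρBα : IntervalIntegrable (fun u => ρ u * Bα u) volume 0 1 :=
    myIntegrable (hρc.mul hBαcont)
  -- rewrite the orthogonality relation
  have h1 : (∫ u in (0:ℝ)..1, ρ u * α (w.lam u))
      - (∫ u in (0:ℝ)..1, w.phi u x)
      + (∫ u in (0:ℝ)..1, R u * w.phi u (π₀ α)) = 0 := by
    have hcongr : Omega v w = ∫ u in (0:ℝ)..1,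
        ((fun u => ρ u * α (w.lam u)) u - (fun u => w.phi u x) u
          + (fun u => R u * w.phi u (π₀ α)) u) := by
      refine intervalIntegral.integral_congr fun u hu => ?_
      show v.phi u (w.lam u) - w.phi u (v.lam u) = _
      show (ρ u • α) (w.lam u) - w.phi u (x - R u • π₀ α) = _
      rw [ContinuousLinearMap.smul_apply, map_sub, _root_.map_smul]
      simp [smul_eq_mul]
      ring
    rw [hcongr] at h0
    rw [intervalIntegral.integral_add (hint1.sub hint2) hint3,
      intervalIntegral.integral_sub hint1 hint2] at h0
    linarith [h0]
  -- integration by parts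
  have hibp : (∫ u in (0:ℝ)..1, (ρ u * Bα u + R u * w.phi u (π₀ α)))
      = R 1 * Bα 1 - R 0 * Bα 0 := by
    refine ftc2 (hRcont.mul hBαcont) (fun u hu => (hRd u hu).mul (hBαd u hu))
      ((hρc.mul hBαcont).add (hRcont.mul hφα))
  rw [intervalIntegral.integral_add hintρBα hint3] at hibp
  have hBα0 : Bα 0 = 0 := integral_same
  -- main term
  have hmain : (∫ u in (0:ℝ)..1, ρ u * α (w.lam u + π₀ (∫ s in (0:ℝ)..u, w.phi s)))
      = (∫ u in (0:ℝ)..1, ρ u * α (w.lam u)) - ∫ u in (0:ℝ)..1, ρ u * Bα u := by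
    rw [← intervalIntegral.integral_sub hint1 hintρBα]
    refine intervalIntegral.integral_congr fun u hu => ?_
    rw [uIcc_of_le zero_le_one] at hu
    have : α (π₀ (∫ s in (0:ℝ)..u, w.phi s)) = - Bα u := by
      rw [hskew, hBapp u hu]
    rw [map_add, this]
    ring
  have hB1x : (∫ s in (0:ℝ)..1, w.phi s) x = ∫ u in (0:ℝ)..1, w.phi u x :=
    hBapp 1 ⟨zero_le_one, le_rfl⟩ x
  have hB1πα : (∫ s in (0:ℝ)..1, w.phi s) (π₀ α) = Bα 1 :=
    hBapp 1 ⟨zero_le_one, le_rfl⟩ (π₀ α)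
  have hR1 : (∫ u in (0:ℝ)..1, ρ u) = R 1 := rfl
  rw [hmain, hB1x, hB1πα, hR1]
  rw [hR0, hBα0] at hibp
  linarith [h1, hibp]
end Master
section steps
open intervalIntegral
variable {E : Type*} [NormedAddCommGroup E] [NormedSpace ℝ E] [FiniteDimensional ℝ E]
    (π₀ : (E →L[ℝ] ℝ) →ₗ[ℝ] E) (Q : E ≃L[ℝ] E)

lemma step1 (hskew : ∀ α β : E →L[ℝ] ℝ, α (π₀ β) = - β (π₀ α)) (w : WPair E)
    (horth : ∀ a ∈ VPer π₀ Q, Omega a w = 0) :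
    ∀ u ∈ Icc (0:ℝ) 1, w.lam u = w.lam 0 - π₀ (∫ s in (0:ℝ)..u, w.phi s) := by
  have hπcont : Continuous π₀ := π₀.continuous_of_finiteDimensional
  have hBd := ftc1 w.phi_cont
  have hBcont : ContinuousOn (fun u => (∫ s in (0:ℝ)..u, w.phi s)) (Icc 0 1) :=
    fun u hu => (hBd u hu).continuousWithinAt
  have key : ∀ α : E →L[ℝ] ℝ, ∀ u ∈ Icc (0:ℝ) 1,
      α (w.lam u + π₀ (∫ s in (0:ℝ)..u, w.phi s)) = α (w.lam 0) := by
    intro α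
    set f : ℝ → ℝ := fun u => α (w.lam u + π₀ (∫ s in (0:ℝ)..u, w.phi s)) with hfdef
    have hfc : ContinuousOn f (Icc 0 1) :=
      α.continuous.comp_continuousOn (w.lam_cont.add (hπcont.comp_continuousOn hBcont))
    have hvar := variational hfc (fun ρ hρc hρ0 hρ1 hmean => by
      have := master π₀ Q hskew w horth ρ hρc hρ0 hρ1 α 0
        (by rw [map_zero, sub_zero, hmean, zero_smul])
      rw [hmean, zero_mul, add_zero, map_zero, sub_zero] at this
      exact this)
    intro u hu
    have hf0 : f 0 = α (w.lam 0) := by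
      simp [hfdef, intervalIntegral.integral_same]
    rw [← hf0]; exact hvar u hu
  intro u hu
  have : ∀ α : E →L[ℝ] ℝ,
      α (w.lam u + π₀ (∫ s in (0:ℝ)..u, w.phi s) - w.lam 0) = 0 := by
    intro α
    rw [map_sub, key α u hu, sub_self]
  have hz : w.lam u + π₀ (∫ s in (0:ℝ)..u, w.phi s) - w.lam 0 = 0 := by
    have := mem_of_forall_clm (⊥ : Submodule ℝ E) _ (fun α _ => this α)
    simpa using this
  have := sub_eq_zero.mp hz
  rw [eq_comm, ← sub_eq_iff_eq_add'] at this
  rw [← this]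
  abel

lemma stepB (hskew : ∀ α β : E →L[ℝ] ℝ, α (π₀ β) = - β (π₀ α)) (w : WPair E)
    (horth : ∀ a ∈ VPer π₀ Q, Omega a w = 0) :
    ∀ x : E, Q x = x → (∫ s in (0:ℝ)..1, w.phi s) x = 0 := by
  intro x hQx
  have := master π₀ Q hskew w horth (fun _ => 0) continuousOn_const rfl rfl 0 x
    (by rw [hQx, sub_self, map_zero, smul_zero])
  simpa using this

lemma stepC (hskew : ∀ α β : E →L[ℝ] ℝ, α (π₀ β) = - β (π₀ α)) (w : WPair E)
    (horth : ∀ a ∈ VPer π₀ Q, Omega a w = 0) :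
    ∀ (α : E →L[ℝ] ℝ) (x : E), x - Q x = π₀ α →
      α (w.lam 0) + (∫ s in (0:ℝ)..1, w.phi s) (π₀ α) = (∫ s in (0:ℝ)..1, w.phi s) x := by
  intro α x hx
  set ρ : ℝ → ℝ := fun u => 6 * (u * (1 - u)) with hρdef
  have hρint : (∫ u in (0:ℝ)..1, ρ u) = 1 := by
    rw [hρdef]
    simp only []
    rw [intervalIntegral.integral_const_mul]
    have : ∀ u : ℝ, u * (1 - u) = u - u^2 := fun u => by ring
    simp_rw [this]
    rw [intervalIntegral.integral_sub (Continuous.intervalIntegrable (by continuity) 0 1)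
      (Continuous.intervalIntegrable (by continuity) 0 1)]
    simp [integral_id, integral_pow]
    norm_num
  have hm := master π₀ Q hskew w horth ρ
    ((continuous_const.mul (continuous_id.mul (continuous_const.sub continuous_id))).continuousOn)
    (by simp [hρdef]) (by simp [hρdef]) α x (by rw [hρint, one_smul]; exact hx)
  rw [hρint, one_mul] at hm
  have hcongr : (∫ u in (0:ℝ)..1, ρ u * α (w.lam u + π₀ (∫ s in (0:ℝ)..u, w.phi s)))
      = ∫ u in (0:ℝ)..1, ρ u * α (w.lam 0) := by
    refine intervalIntegral.integral_congr fun u hu => ?_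
    rw [uIcc_of_le zero_le_one] at hu
    rw [step1 π₀ Q hskew w horth u hu]
    congr 1
    congr 1
    abel
  rw [hcongr, intervalIntegral.integral_mul_const, hρint, one_mul] at hm
  linarith [hm]
end steps
section ExistsBeta
variable {E : Type*} [NormedAddCommGroup E] [NormedSpace ℝ E] [FiniteDimensional ℝ E]

lemma exists_beta (π₀ : (E →L[ℝ] ℝ) →ₗ[ℝ] E) (Q : E ≃L[ℝ] E)
    (hskew : ∀ α β : E →L[ℝ] ℝ, α (π₀ β) = - β (π₀ α))
    (B1 : E →L[ℝ] ℝ) (lam0 : E)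
    (hB : ∀ x : E, Q x = x → B1 x = 0)
    (hC : ∀ (α : E →L[ℝ] ℝ) (x : E), x - Q x = π₀ α → α lam0 + B1 (π₀ α) = B1 x) :
    ∃ β : E →L[ℝ] ℝ, π₀ β = lam0 ∧ β = (β - B1).comp (Q : E →L[ℝ] E) := by
  set Qc : E →L[ℝ] E := (Q : E →L[ℝ] E) with hQc
  set Tc : E →L[ℝ] E := ContinuousLinearMap.id ℝ E - Qc with hTc
  have hTapp : ∀ x : E, Tc x = x - Q x := fun x => by
    simp [hTc, hQc, ContinuousLinearMap.sub_apply]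
  set Tl : E →ₗ[ℝ] E := (Tc : E →ₗ[ℝ] E) with hTl
  have hTlapp : ∀ x : E, Tl x = x - Q x := fun x => hTapp x
  -- the functional ψ
  set ψl : E →ₗ[ℝ] ℝ := -((B1.comp Qc : E →L[ℝ] ℝ) : E →ₗ[ℝ] ℝ) with hψl
  have hψapp : ∀ x : E, ψl x = -(B1 (Q x)) := fun x => by
    simp [hψl, hQc]
  have hker : LinearMap.ker Tl ≤ LinearMap.ker ψl := by
    intro x hx
    rw [LinearMap.mem_ker] at hx ⊢
    rw [hTlapp, sub_eq_zero] at hx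
    rw [hψapp, ← hx, hB x hx.symm, neg_zero]
  -- extend to β₁
  obtain ⟨β₁, hβ₁⟩ := LinearMap.exists_extend
    (((LinearMap.ker Tl).liftQ ψl hker).comp Tl.quotKerEquivRange.symm.toLinearMap)
  have hβ₁T : ∀ x : E, β₁ (Tl x) = ψl x := by
    intro x
    have hmem : Tl x ∈ LinearMap.range Tl := ⟨x, rfl⟩
    calc β₁ (Tl x) = (β₁.comp (LinearMap.range Tl).subtype) ⟨Tl x, hmem⟩ := rfl
      _ = ((LinearMap.ker Tl).liftQ ψl hker)
            (Tl.quotKerEquivRange.symm ⟨Tl x, hmem⟩) := by rw [hβ₁]; rfl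
      _ = ((LinearMap.ker Tl).liftQ ψl hker) ((LinearMap.ker Tl).mkQ x) := by
            rw [LinearMap.quotKerEquivRange_symm_apply_image]
      _ = ψl x := by rw [Submodule.mkQ_apply, Submodule.liftQ_apply]
  set β₁c : E →L[ℝ] ℝ := LinearMap.toContinuousLinearMap β₁ with hβ₁c
  have hβ₁capp : ∀ x : E, β₁c x = β₁ x := fun x => rfl
  -- the kernel submodule K
  set Tdual : (E →L[ℝ] ℝ) →ₗ[ℝ] (E →L[ℝ] ℝ) :=
    { toFun := fun γ => γ.comp Tc
      map_add' := fun γ δ => ContinuousLinearMap.add_comp γ δ Tc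
      map_smul' := fun c γ => ContinuousLinearMap.smul_comp c γ Tc } with hTdual
  have hKiff : ∀ γ : E →L[ℝ] ℝ, γ ∈ LinearMap.ker Tdual ↔ ∀ y : E, γ (y - Q y) = 0 := by
    intro γ
    rw [LinearMap.mem_ker]
    constructor
    · intro h y
      have : (γ.comp Tc) y = (0 : E →L[ℝ] ℝ) y := by rw [show γ.comp Tc = 0 from h]
      simpa [hTapp y] using this
    · intro h
      ext y
      show γ (Tc y) = 0
      rw [hTapp y]; exact h y
  set U : Submodule ℝ E := (LinearMap.ker Tdual).map π₀ with hU
  set v₀ : E := lam0 - π₀ β₁c with hv₀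
  have hv₀U : v₀ ∈ U := by
    apply mem_of_forall_clm
    intro α hα
    -- π₀ α ∈ range Tl
    have hπα : π₀ α ∈ LinearMap.range Tl := by
      apply mem_of_forall_clm
      intro γ hγ
      have hγK : γ ∈ LinearMap.ker Tdual := by
        rw [hKiff]
        intro y
        have : Tl y ∈ LinearMap.range Tl := ⟨y, rfl⟩
        have := hγ (Tl y) this
        rwa [hTlapp] at this
      have h1 : α (π₀ γ) = 0 := hα (π₀ γ) ⟨γ, hγK, rfl⟩
      rw [hskew γ α, h1, neg_zero]
    obtain ⟨x, hTx⟩ := hπα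
    have hxQ : x - Q x = π₀ α := by rw [← hTlapp x, hTx]
    have hCx := hC α x hxQ
    have hαβ₁ : α (π₀ β₁c) = B1 x - B1 (π₀ α) := by
      rw [hskew α β₁c, hβ₁capp, ← hTx, hβ₁T, hψapp, neg_neg]
      have : Tl x = x - Q x := hTlapp x
      have h2 : (Q : E → E) x = x - π₀ α := by
        rw [← hxQ]; abel
      rw [h2, map_sub, hTx]
    rw [hv₀, map_sub, hαβ₁]
    linarith [hCx]
  obtain ⟨γ, hγK, hγv⟩ := hv₀U
  refine ⟨β₁c + γ, ?_, ?_⟩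
  · rw [map_add, hγv, hv₀]
    abel
  · ext y
    have hγy : γ (y - Q y) = 0 := (hKiff γ).mp hγK y
    have hβ₁y : β₁c (y - Q y) = -(B1 (Q y)) := by
      rw [hβ₁capp, ← hTlapp y, hβ₁T, hψapp]
    rw [ContinuousLinearMap.add_apply, ContinuousLinearMap.comp_apply,
      ContinuousLinearMap.sub_apply, ContinuousLinearMap.add_apply]
    have h1 : β₁c y - β₁c (Q y) = -(B1 (Q y)) := by
      rw [← hβ₁y, map_sub]
    have h2 : γ y - γ (Q y) = 0 := by rw [← hγy, map_sub]
    have : ((Q : E →L[ℝ] E) : E → E) y = (Q : E → E) y := rfl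
    rw [this]
    linarith [h1, h2]

end ExistsBeta

section RevIncl
open intervalIntegral
variable {E : Type*} [NormedAddCommGroup E] [NormedSpace ℝ E] [FiniteDimensional ℝ E]

lemma rev_incl (π₀ : (E →L[ℝ] ℝ) →ₗ[ℝ] E) (Q : E ≃L[ℝ] E)
    (hskew : ∀ α β : E →L[ℝ] ℝ, α (π₀ β) = - β (π₀ α))
    (w : WPair E)
    (b b' : ℝ → E →L[ℝ] ℝ) (hb' : ContinuousOn b' (Icc 0 1))
    (hbd : ∀ u ∈ Icc (0:ℝ) 1, HasDerivWithinAt b (b' u) (Icc 0 1) u)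
    (hbQ : b 0 = (b 1).comp (Q : E →L[ℝ] E))
    (hlam : ∀ u ∈ Icc (0:ℝ) 1, w.lam u = π₀ (b u))
    (hphi : ∀ u ∈ Icc (0:ℝ) 1, w.phi u = - b' u) :
    ∀ a ∈ VPer π₀ Q, Omega a w = 0 := by
  rintro a ⟨⟨haQ, -⟩, haV⟩
  set π₀c : (E →L[ℝ] ℝ) →L[ℝ] E := LinearMap.toContinuousLinearMap π₀ with hπ₀c
  have hπ₀capp : ∀ z, π₀c z = π₀ z := fun z => rfl
  have hΦd := ftc1 a.phi_cont
  have hlamd : ∀ u ∈ Icc (0:ℝ) 1,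
      HasDerivWithinAt a.lam (-(π₀ (a.phi u))) (Icc 0 1) u := by
    intro u hu
    have h1 : HasDerivWithinAt (fun t => a.lam 0 - π₀c (∫ s in (0:ℝ)..t, a.phi s))
        (-(π₀c (a.phi u))) (Icc 0 1) u :=
      HasDerivWithinAt.const_sub (a.lam 0)
        (π₀c.hasFDerivAt.comp_hasDerivWithinAt u (hΦd u hu))
    rw [hπ₀capp] at h1
    exact HasDerivWithinAt.congr h1
      (fun y hy => by rw [haV y hy, hπ₀capp]) (by rw [haV u hu, hπ₀capp])
  set g : ℝ → ℝ := fun u => b u (a.lam u) with hgdef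
  set g' : ℝ → ℝ := fun u => b' u (a.lam u) + b u (-(π₀ (a.phi u))) with hg'def
  have hg : ∀ u ∈ Icc (0:ℝ) 1, HasDerivWithinAt g (g' u) (Icc 0 1) u :=
    fun u hu => (hbd u hu).clm_apply (hlamd u hu)
  have hbc : ContinuousOn b (Icc 0 1) := fun u hu => (hbd u hu).continuousWithinAt
  have hgc : ContinuousOn g (Icc 0 1) := fun u hu => (hg u hu).continuousWithinAt
  have hg'c : ContinuousOn g' (Icc 0 1) :=
    (hb'.clm_apply a.lam_cont).add
      (hbc.clm_apply ((π₀c.continuous.comp_continuousOn a.phi_cont).neg))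
  have hint : (∫ u in (0:ℝ)..1, g' u) = g 1 - g 0 := ftc2 hgc hg hg'c
  have homega : Omega a w = ∫ u in (0:ℝ)..1, g' u := by
    refine intervalIntegral.integral_congr fun u hu => ?_
    rw [uIcc_of_le zero_le_one] at hu
    show a.phi u (w.lam u) - w.phi u (a.lam u) = g' u
    rw [hlam u hu, hphi u hu, hskew (a.phi u) (b u)]
    simp only [hg'def, ContinuousLinearMap.neg_apply, map_neg]
    ring
  rw [homega, hint, hgdef]
  simp only []
  rw [haQ, hbQ]
  simp

end RevIncl


theorem orthWithin_VPer_eq_symmetries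
    (E : Type*) [NormedAddCommGroup E] [NormedSpace ℝ E] [FiniteDimensional ℝ E]
    (π₀ : (E →L[ℝ] ℝ) →ₗ[ℝ] E)
    (hskew : ∀ α β : E →L[ℝ] ℝ, α (π₀ β) = - β (π₀ α))
    (Q : E ≃L[ℝ] E)
    (hQ : ∀ α : E →L[ℝ] ℝ, Q (π₀ (α.comp (Q : E →L[ℝ] E))) = π₀ α) :
    orthWithin (WPer Q) (VPer π₀ Q) =
      {w ∈ WPer Q | ∃ b b' : ℝ → (E →L[ℝ] ℝ),
        ContinuousOn b' (Icc 0 1) ∧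
        (∀ u ∈ Icc (0:ℝ) 1, HasDerivWithinAt b (b' u) (Icc 0 1) u) ∧
        b 0 = (b 1).comp (Q : E →L[ℝ] E) ∧
        (∀ u ∈ Icc (0:ℝ) 1, w.lam u = π₀ (b u)) ∧
        (∀ u ∈ Icc (0:ℝ) 1, w.phi u = - b' u)} := by
  ext w
  constructor
  · rintro ⟨hwper, horth⟩
    refine ⟨hwper, ?_⟩
    obtain ⟨β, hπβ, hβQ⟩ := exists_beta π₀ Q hskew (∫ s in (0:ℝ)..1, w.phi s) (w.lam 0)
      (stepB π₀ Q hskew w horth) (stepC π₀ Q hskew w horth)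
    refine ⟨fun u => β - (∫ s in (0:ℝ)..u, w.phi s), fun u => -(w.phi u),
      w.phi_cont.neg, ?_, ?_, ?_, ?_⟩
    · intro u hu
      exact (ftc1 w.phi_cont u hu).const_sub β
    · show β - (∫ s in (0:ℝ)..0, w.phi s) = _
      rw [intervalIntegral.integral_same, sub_zero]
      exact hβQ
    · intro u hu
      rw [step1 π₀ Q hskew w horth u hu, map_sub, hπβ]
    · intro u hu
      rw [neg_neg]
  · rintro ⟨hwper, b, b', hb', hbd, hbQ, hlam, hphi⟩
    exact ⟨hwper, rev_incl π₀ Q hskew w b b' hb' hbd hbQ hlam hphi⟩
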